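/- Let m > 1, N ≥ 2 an integer, and h0 = √(2/(m+1)). Consider the planar system X'(t) = ((m−1)/2)X(t)Y(t) − X(t)², Y'(t) = −((m+1)/2)Y(t)² + 1 − (N−1)X(t)Y(t). Then the closed rectangle R = [0, (m−1)h0/2] × [0, h0] is positively invariant: for every solution (X, Y) defined on an interval [t0, t1] with (X(t0), Y(t0)) ∈ R, one has (X(t), Y(t)) ∈ R for every t ∈ [t0, t1]. -/

import Mathlib

open Set

lemma hasDerivAt_posPart_sq (x : ℝ) :
    HasDerivAt (fun y : ℝ => max y 0 ^ 2) (2 * max x 0) x := by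
  rcases lt_trichotomy x 0 with hx | hx | hx
  · have h : (fun y : ℝ => max y 0 ^ 2) =ᶠ[nhds x] fun _ => (0:ℝ) := by
      filter_upwards [Iio_mem_nhds hx] with y hy
      simp [max_eq_right (le_of_lt (mem_Iio.mp hy))]
    rw [max_eq_right hx.le, mul_zero]
    exact (hasDerivAt_const x (0:ℝ)).congr_of_eventuallyEq h
  · subst hx
    rw [max_self, mul_zero]
    rw [hasDerivAt_iff_tendsto_slope]
    have hb : ∀ z : ℝ, ‖slope (fun y : ℝ => max y 0 ^ 2) 0 z‖ ≤ |z| := by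
      intro z
      rcases eq_or_ne z 0 with rfl | hz
      · simp [slope]
      · have h1 : |max z 0 ^ 2| ≤ z ^ 2 := by
          rw [abs_of_nonneg (by positivity)]
          rcases le_or_gt z 0 with h | h
          · simp [max_eq_right h]; positivity
          · simp [max_eq_left h.le]
        have : slope (fun y : ℝ => max y 0 ^ 2) 0 z = max z 0 ^ 2 / z := by
          simp [slope_def_field]
        rw [this, Real.norm_eq_abs, abs_div]
        rw [div_le_iff₀ (abs_pos.mpr hz)]
        calc |max z 0 ^ 2| ≤ z ^ 2 := h1
          _ = |z| * |z| := by rw [sq]; exact (abs_mul_abs_self z).symm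
    exact squeeze_zero_norm hb
      ((continuous_abs.tendsto' 0 0 abs_zero).mono_left nhdsWithin_le_nhds)
  · have h : (fun y : ℝ => max y 0 ^ 2) =ᶠ[nhds x] fun y => y ^ 2 := by
      filter_upwards [Ioi_mem_nhds hx] with y hy
      simp [max_eq_left (le_of_lt (mem_Ioi.mp hy))]
    rw [max_eq_left hx.le]
    have : HasDerivAt (fun y : ℝ => y ^ 2) (2 * x) x := by
      simpa using (hasDerivAt_pow 2 x)
    exact this.congr_of_eventuallyEq h

/-- Grönwall-type: nonpositive-at-start function with `f' ≤ K f` stays `≤ 0`. -/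
lemma stays_nonpos {a b K : ℝ} {f f' : ℝ → ℝ}
    (hf : ∀ t ∈ Icc a b, HasDerivAt f (f' t) t)
    (hfa : f a ≤ 0)
    (bound : ∀ t ∈ Icc a b, f' t ≤ K * f t) :
    ∀ t ∈ Icc a b, f t ≤ 0 := by
  intro t ht
  have h := le_gronwallBound_of_liminf_deriv_right_le (δ := 0) (K := K) (ε := 0)
    (fun s hs => (hf s hs).continuousAt.continuousWithinAt)
    (fun s hs r hr =>
      (hf s (Ico_subset_Icc_self hs)).hasDerivWithinAt.liminf_right_slope_le hr)
    hfa
    (fun s hs => by simpa using bound s (Ico_subset_Icc_self hs))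
    t ht
  simpa [gronwallBound_ε0_δ0] using h


/-- the rectangle `[0, (m-1)h0/2] × [0, h0]`, with
`h0 = √(2/(m+1))`, is positively invariant for the planar system
`X' = ((m-1)/2)XY - X²`, `Y' = -((m+1)/2)Y² + 1 - (N-1)XY` (the restriction of
the phase-space system to the invariant plane `{Z = 0}`). -/
theorem rectangle_positively_invariant
    (m : ℝ) (hm : 1 < m) (N : ℕ) (hN : 2 ≤ N)
    (h0 : ℝ) (hh0 : h0 = Real.sqrt (2 / (m + 1)))
    (t0 t1 : ℝ) (X Y : ℝ → ℝ)
    (hX : ∀ t ∈ Icc t0 t1, HasDerivAt X ((m - 1) / 2 * X t * Y t - X t ^ 2) t)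
    (hY : ∀ t ∈ Icc t0 t1,
      HasDerivAt Y (-((m + 1) / 2) * Y t ^ 2 + 1 - ((N : ℝ) - 1) * X t * Y t) t)
    (hinit : X t0 ∈ Icc 0 ((m - 1) * h0 / 2) ∧ Y t0 ∈ Icc 0 h0) :
    ∀ t ∈ Icc t0 t1, X t ∈ Icc 0 ((m - 1) * h0 / 2) ∧ Y t ∈ Icc 0 h0 := by
  have hm1 : (0:ℝ) < m + 1 := by linarith
  have h0pos : 0 < h0 := hh0 ▸ Real.sqrt_pos.mpr (by positivity)
  have hh0sq : h0 ^ 2 = 2 / (m + 1) := by rw [hh0]; exact Real.sq_sqrt (by positivity)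
  have hkey : (m + 1) * h0 ^ 2 = 2 := by rw [hh0sq]; field_simp
  have hNc : (2:ℝ) ≤ (N:ℝ) := by exact_mod_cast hN
  -- continuity & bounds
  have hXc : ContinuousOn X (Icc t0 t1) := fun s hs => (hX s hs).continuousAt.continuousWithinAt
  have hYc : ContinuousOn Y (Icc t0 t1) := fun s hs => (hY s hs).continuousAt.continuousWithinAt
  obtain ⟨C1, hC1⟩ := isCompact_Icc.exists_bound_of_continuousOn
    (f := fun s => (m - 1) / 2 * Y s - X s)
    (((hYc.const_smul ((m-1)/2)).sub hXc).congr (fun s _ => by simp [smul_eq_mul]))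
  obtain ⟨C2, hC2⟩ := isCompact_Icc.exists_bound_of_continuousOn
    (f := fun s => -((m + 1) / 2) * Y s - ((N:ℝ) - 1) * X s)
    (((hYc.const_smul (-((m+1)/2))).sub (hXc.const_smul ((N:ℝ)-1))).congr
      (fun s _ => by simp [smul_eq_mul]))
  -- Step 1: X ≥ 0
  have hX0 : ∀ s ∈ Icc t0 t1, 0 ≤ X s := by
    have hmain := stays_nonpos (K := 2 * C1)
      (f := fun s => max (-X s) 0 ^ 2)
      (f' := fun s => 2 * max (-X s) 0 * -((m - 1) / 2 * X s * Y s - X s ^ 2))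
      (fun s hs => (hasDerivAt_posPart_sq (-X s)).comp s (hX s hs).neg)
      (by simp [max_eq_right (by linarith [hinit.1.1] : -X t0 ≤ 0)])
      (by
        intro s hs
        beta_reduce
        have hg : (m - 1) / 2 * Y s - X s ≤ C1 := (abs_le.mp ((hC1 s hs))).2
        rcases le_or_gt (X s) 0 with h | h
        · rw [max_eq_left (by linarith)]
          nlinarith [mul_le_mul_of_nonneg_left hg (sq_nonneg (X s))]
        · rw [max_eq_right (by linarith)]; simp)
    intro s hs
    have h2 : max (-X s) 0 = 0 := by
      have hsq : max (-X s) 0 ^ 2 = 0 := le_antisymm (hmain s hs) (sq_nonneg _)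
      exact (pow_eq_zero_iff two_ne_zero).mp hsq
    have := le_max_left (-X s) (0:ℝ)
    rw [h2] at this; linarith
  -- Step 2: Y ≥ 0
  have hY0 : ∀ s ∈ Icc t0 t1, 0 ≤ Y s := by
    have hmain := stays_nonpos (K := 2 * C2)
      (f := fun s => max (-Y s) 0 ^ 2)
      (f' := fun s => 2 * max (-Y s) 0 *
        -(-((m + 1) / 2) * Y s ^ 2 + 1 - ((N:ℝ) - 1) * X s * Y s))
      (fun s hs => (hasDerivAt_posPart_sq (-Y s)).comp s (hY s hs).neg)
      (by simp [max_eq_right (by linarith [hinit.2.1] : -Y t0 ≤ 0)])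
      (by
        intro s hs
        beta_reduce
        have hg : -((m + 1) / 2) * Y s - ((N:ℝ) - 1) * X s ≤ C2 := (abs_le.mp ((hC2 s hs))).2
        rcases le_or_gt (Y s) 0 with h | h
        · rw [max_eq_left (by linarith)]
          nlinarith [mul_le_mul_of_nonneg_left hg (sq_nonneg (Y s)), h]
        · rw [max_eq_right (by linarith)]; simp)
    intro s hs
    have h2 : max (-Y s) 0 = 0 := by
      have hsq : max (-Y s) 0 ^ 2 = 0 := le_antisymm (hmain s hs) (sq_nonneg _)
      exact (pow_eq_zero_iff two_ne_zero).mp hsq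
    have := le_max_left (-Y s) (0:ℝ)
    rw [h2] at this; linarith
  -- Step 3: Y ≤ h0
  have hYh : ∀ s ∈ Icc t0 t1, Y s ≤ h0 := by
    have hmain := stays_nonpos (K := 0)
      (f := fun s => max (Y s - h0) 0 ^ 2)
      (f' := fun s => 2 * max (Y s - h0) 0 *
        (-((m + 1) / 2) * Y s ^ 2 + 1 - ((N:ℝ) - 1) * X s * Y s))
      (fun s hs => by
        simpa [Function.comp_def] using (hasDerivAt_posPart_sq (Y s - h0)).comp s ((hY s hs).sub_const h0))
      (by simp [max_eq_right (by linarith [hinit.2.2] : Y t0 - h0 ≤ 0)])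
      (by
        intro s hs
        beta_reduce
        rw [zero_mul]
        rcases le_or_gt (Y s - h0) 0 with h | h
        · rw [max_eq_right h]; simp
        · rw [max_eq_left h.le]
          have hXs := hX0 s hs
          have hYs : h0 ≤ Y s := by linarith
          have hXY : 0 ≤ ((N:ℝ) - 1) * X s * Y s :=
            mul_nonneg (mul_nonneg (by linarith) hXs) (by linarith)
          have hY2 : h0 ^ 2 ≤ Y s ^ 2 := by nlinarith
          have hle : -((m + 1) / 2) * Y s ^ 2 + 1 - ((N:ℝ) - 1) * X s * Y s ≤ 0 := by nlinarith
          nlinarith [mul_nonneg (by linarith : (0:ℝ) ≤ Y s - h0)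
            (by linarith : (0:ℝ) ≤ -(-((m + 1) / 2) * Y s ^ 2 + 1 - ((N:ℝ) - 1) * X s * Y s))])
    intro s hs
    have h2 : max (Y s - h0) 0 = 0 := by
      have hsq : max (Y s - h0) 0 ^ 2 = 0 := le_antisymm (hmain s hs) (sq_nonneg _)
      exact (pow_eq_zero_iff two_ne_zero).mp hsq
    have := le_max_left (Y s - h0) (0:ℝ)
    rw [h2] at this; linarith
  -- Step 4: X ≤ (m-1)h0/2
  have hXh : ∀ s ∈ Icc t0 t1, X s ≤ (m - 1) * h0 / 2 := by
    have hmain := stays_nonpos (K := 0)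
      (f := fun s => max (X s - (m - 1) * h0 / 2) 0 ^ 2)
      (f' := fun s => 2 * max (X s - (m - 1) * h0 / 2) 0 *
        ((m - 1) / 2 * X s * Y s - X s ^ 2))
      (fun s hs => by
        simpa [Function.comp_def] using (hasDerivAt_posPart_sq (X s - (m - 1) * h0 / 2)).comp s
          ((hX s hs).sub_const ((m - 1) * h0 / 2)))
      (by simp [max_eq_right (by linarith [hinit.1.2] : X t0 - (m - 1) * h0 / 2 ≤ 0)])
      (by
        intro s hs
        beta_reduce
        rw [zero_mul]
        rcases le_or_gt (X s - (m - 1) * h0 / 2) 0 with h | h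
        · rw [max_eq_right h]; simp
        · rw [max_eq_left h.le]
          have hXs := hX0 s hs
          have hYs := hYh s hs
          have hYs0 := hY0 s hs
          have hc : 0 ≤ (m - 1) / 2 * X s := mul_nonneg (by linarith) hXs
          have h1 : (m - 1) / 2 * X s * Y s ≤ (m - 1) / 2 * X s * h0 :=
            mul_le_mul_of_nonneg_left hYs hc
          have hle : (m - 1) / 2 * X s * Y s - X s ^ 2 ≤ 0 := by
            nlinarith [mul_nonneg hXs (by linarith : (0:ℝ) ≤ X s - (m - 1) * h0 / 2)]
          nlinarith [mul_nonneg h.le (neg_nonneg.mpr hle)])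
    intro s hs
    have h2 : max (X s - (m - 1) * h0 / 2) 0 = 0 := by
      have hsq : max (X s - (m - 1) * h0 / 2) 0 ^ 2 = 0 :=
        le_antisymm (hmain s hs) (sq_nonneg _)
      exact (pow_eq_zero_iff two_ne_zero).mp hsq
    have := le_max_left (X s - (m - 1) * h0 / 2) (0:ℝ)
    rw [h2] at this; linarith
  exact fun t ht => ⟨⟨hX0 t ht, hXh t ht⟩, ⟨hY0 t ht, hYh t ht⟩⟩
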